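/- Let m, n, A, B be positive integers with A ∣ B, AB ∣ mn and A ∣ gcd(m, n). Then the number of subgroups of ℤ_m × ℤ_n isomorphic to ℤ_A × ℤ_B equals Σ φ(ij/(AB)), where the sum is over pairs (i, j) with i ∣ m, j ∣ n, AB ∣ ij and lcm(i, j) = B. -/

import Mathlib

open AddSubgroup Function



lemma zsmul_coe_eq_zero_iff {n j : ℕ} (hj : j ∣ n) (hn : n ≠ 0) (z : ℤ) :
    z • ((n / j : ℕ) : ZMod n) = 0 ↔ (j : ℤ) ∣ z := by
  have hj0 : j ≠ 0 := fun h => hn (by simpa [h] using hj)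
  have hd0 : (n / j : ℕ) ≠ 0 :=
    Nat.div_ne_zero_iff.2 ⟨hj0, Nat.le_of_dvd (Nat.pos_of_ne_zero hn) hj⟩
  have h1 : z • ((n / j : ℕ) : ZMod n) = ((z * (n / j : ℕ) : ℤ) : ZMod n) := by
    rw [zsmul_eq_mul, Int.cast_mul, Int.cast_natCast]
  rw [h1, ZMod.intCast_zmod_eq_zero_iff_dvd]
  conv_lhs => rw [show (n : ℤ) = (j : ℤ) * ((n / j : ℕ) : ℤ) by
    exact_mod_cast (Nat.mul_div_cancel' hj).symm]
  rw [mul_dvd_mul_iff_right (by exact_mod_cast hd0 : ((n / j : ℕ) : ℤ) ≠ 0)]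

lemma addOrderOf_coe_div {n d : ℕ} (hd : d ∣ n) (hn : n ≠ 0) :
    addOrderOf ((n / d : ℕ) : ZMod n) = d := by
  rw [ZMod.addOrderOf_coe _ hn, Nat.gcd_eq_right (Nat.div_dvd_of_dvd hd), Nat.div_div_self hd hn]

lemma card_zmultiples_coe {n d : ℕ} (hd : d ∣ n) (hn : n ≠ 0) :
    Nat.card (zmultiples ((n / d : ℕ) : ZMod n)) = d := by
  rw [Nat.card_zmultiples, addOrderOf_coe_div hd hn]

lemma addSubgroup_zmod_eq {n : ℕ} (hn : n ≠ 0) (K : AddSubgroup (ZMod n)) :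
    Nat.card K ∣ n ∧ K = zmultiples ((n / Nat.card K : ℕ) : ZMod n) := by
  haveI : NeZero n := ⟨hn⟩
  obtain ⟨g, hg⟩ := IsAddCyclic.exists_generator (α := K)
  have hKg : K = zmultiples (g : ZMod n) := by
    ext z; constructor
    · intro hz
      obtain ⟨t, ht⟩ := hg ⟨z, hz⟩
      exact ⟨t, by simpa using congrArg (Subtype.val) ht⟩
    · rintro ⟨t, rfl⟩
      exact zsmul_mem g.2 t
  have hcard : Nat.card K = addOrderOf (g : ZMod n) := by
    have := congrArg (fun S : AddSubgroup (ZMod n) => Nat.card S) hKg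
    simpa only [Nat.card_zmultiples] using this
  have hord : addOrderOf ((g : ZMod n)) = n / n.gcd (g : ZMod n).val := by
    conv_lhs => rw [← ZMod.natCast_zmod_val (g : ZMod n)]
    exact ZMod.addOrderOf_coe _ hn
  have hdvd : Nat.card K ∣ n := by
    rw [hcard, hord]; exact Nat.div_dvd_of_dvd (Nat.gcd_dvd_left _ _)
  refine ⟨hdvd, ?_⟩
  -- gcd n g.val = n / card K
  have hg0 : n.gcd (g : ZMod n).val ≠ 0 := by
    have : 0 < n.gcd (g : ZMod n).val := Nat.gcd_pos_of_pos_left _ (Nat.pos_of_ne_zero hn)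
    omega
  have hgcd : n.gcd (g : ZMod n).val = n / Nat.card K := by
    rw [hcard, hord, Nat.div_div_self (Nat.gcd_dvd_left _ _) hn]
  have hmem : (g : ZMod n) ∈ zmultiples ((n / Nat.card K : ℕ) : ZMod n) := by
    rw [← hgcd]
    obtain ⟨t, ht⟩ : (n.gcd (g : ZMod n).val) ∣ (g : ZMod n).val := Nat.gcd_dvd_right _ _
    refine ⟨(t : ℤ), ?_⟩
    calc (t : ℤ) • ((n.gcd (g : ZMod n).val : ℕ) : ZMod n)
        = ((n.gcd (g : ZMod n).val * t : ℕ) : ZMod n) := by push_cast [zsmul_eq_mul]; ring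
      _ = (g : ZMod n) := by rw [← ht, ZMod.natCast_zmod_val]
  have hle : K ≤ zmultiples ((n / Nat.card K : ℕ) : ZMod n) := by
    intro z hz
    rw [hKg] at hz
    obtain ⟨t, rfl⟩ := hz
    exact zsmul_mem hmem t
  have hcards : Nat.card (zmultiples ((n / Nat.card K : ℕ) : ZMod n)) = Nat.card K :=
    card_zmultiples_coe hdvd hn
  exact AddSubgroup.eq_of_le_of_card_ge hle (le_of_eq hcards)


section
variable (m n i j q : ℕ) (r : ZMod q)

/-- the parametrized subgroup of `ZMod m × ZMod n` -/
def Hp : AddSubgroup (ZMod m × ZMod n) where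
  carrier := {p | ∃ x y : ℤ, p.1 = x • ((m / i : ℕ) : ZMod m) ∧
    p.2 = y • ((n / j : ℕ) : ZMod n) ∧ (x : ZMod q) * r = (y : ZMod q)}
  zero_mem' := ⟨0, 0, by simp, by simp, by simp⟩
  add_mem' := by
    rintro a b ⟨x, y, h1, h2, h3⟩ ⟨x', y', h1', h2', h3'⟩
    refine ⟨x + x', y + y', ?_, ?_, ?_⟩
    · simp [Prod.fst_add, h1, h1', add_smul]
    · simp [Prod.snd_add, h2, h2', add_smul]
    · push_cast
      rw [add_mul, h3, h3']
  neg_mem' := by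
    rintro a ⟨x, y, h1, h2, h3⟩
    refine ⟨-x, -y, ?_, ?_, ?_⟩
    · simp [h1, neg_smul]
    · simp [h2, neg_smul]
    · push_cast
      rw [neg_mul, h3]

variable {m n i j q r}

lemma mem_Hp (p : ZMod m × ZMod n) :
    p ∈ Hp m n i j q r ↔ ∃ x y : ℤ, p.1 = x • ((m / i : ℕ) : ZMod m) ∧
      p.2 = y • ((n / j : ℕ) : ZMod n) ∧ (x : ZMod q) * r = (y : ZMod q) :=
  Iff.rfl

lemma coe_cast_sub_eq {q : ℕ} (x x' : ℤ) (h : (q : ℤ) ∣ x - x') :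
    (x' : ZMod q) = (x : ZMod q) := by
  have := (ZMod.intCast_zmod_eq_zero_iff_dvd _ _).2 h
  push_cast at this
  linear_combination -this

lemma mem_Hp_pair (hi : i ∣ m) (hm : m ≠ 0) (hqi : q ∣ i)
    (hj : j ∣ n) (hn : n ≠ 0) (hqj : q ∣ j) (x y : ℤ) :
    ((x • ((m / i : ℕ) : ZMod m), y • ((n / j : ℕ) : ZMod n)) : ZMod m × ZMod n)
      ∈ Hp m n i j q r ↔ (x : ZMod q) * r = (y : ZMod q) := by
  constructor
  · rintro ⟨x', y', h1, h2, h3⟩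
    have hx : (x' : ZMod q) = (x : ZMod q) := by
      refine coe_cast_sub_eq x x' (dvd_trans (Int.natCast_dvd_natCast.2 hqi) ?_)
      refine (zsmul_coe_eq_zero_iff hi hm _).1 ?_
      rw [sub_smul, ← h1]; simp
    have hy : (y' : ZMod q) = (y : ZMod q) := by
      refine coe_cast_sub_eq y y' (dvd_trans (Int.natCast_dvd_natCast.2 hqj) ?_)
      refine (zsmul_coe_eq_zero_iff hj hn _).1 ?_
      rw [sub_smul, ← h2]; simp
    rw [← hx, ← hy]; exact h3
  · intro h3
    exact ⟨x, y, rfl, rfl, h3⟩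
end


-- general: card of subgroup of product
lemma card_addSubgroup_prod {G₁ G₂ : Type*} [AddCommGroup G₁] [AddCommGroup G₂]
    [Finite G₁] [Finite G₂] (K : AddSubgroup (G₁ × G₂)) :
    Nat.card K =
      Nat.card (K.map (AddMonoidHom.fst G₁ G₂)) * Nat.card (K.comap (AddMonoidHom.inr G₁ G₂)) := by
  set f := (AddMonoidHom.fst G₁ G₂).comp K.subtype with hf
  have hrange : f.range = K.map (AddMonoidHom.fst G₁ G₂) := by
    rw [AddMonoidHom.range_comp, AddSubgroup.range_subtype]
  have hker : Nonempty (f.ker ≃+ K.comap (AddMonoidHom.inr G₁ G₂)) := by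
    refine ⟨{ toFun := fun h => ⟨h.val.val.2, ?_⟩
              invFun := fun z => ⟨⟨(0, z.val), z.2⟩, ?_⟩
              left_inv := ?_
              right_inv := ?_
              map_add' := ?_ }⟩
    · have h1 : (h.val : G₁ × G₂).1 = 0 := h.2
      have : ((0 : G₁), (h.val : G₁ × G₂).2) = (h.val : G₁ × G₂) := by
        rw [← h1]
      rw [AddSubgroup.mem_comap]
      simpa [AddMonoidHom.inr] using this ▸ h.val.2
    · rfl
    · rintro ⟨⟨⟨a, b⟩, hab⟩, hk⟩
      have : a = 0 := hk
      subst this; rfl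
    · rintro ⟨z, hz⟩; rfl
    · intro a b; rfl
  have h1 : Nat.card K = Nat.card (↥K ⧸ f.ker) * Nat.card f.ker :=
    AddSubgroup.card_eq_card_quotient_mul_card_addSubgroup f.ker
  have h2 : Nat.card (↥K ⧸ f.ker) = Nat.card f.range :=
    Nat.card_congr (QuotientAddGroup.quotientKerEquivRange f).toEquiv
  rw [h1, h2, hrange, Nat.card_congr hker.some.toEquiv]



section
variable {m n i j q : ℕ} {r : ZMod q}

lemma map_fst_Hp :
    (Hp m n i j q r).map (AddMonoidHom.fst _ _) = zmultiples ((m / i : ℕ) : ZMod m) := by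
  ext a
  simp only [AddSubgroup.mem_map]
  constructor
  · rintro ⟨p, hp, rfl⟩
    obtain ⟨x, y, h1, h2, h3⟩ := (mem_Hp p).1 hp
    exact ⟨x, h1.symm⟩
  · intro ha
    obtain ⟨x, hx⟩ := mem_zmultiples_iff.1 ha
    obtain ⟨y, hy⟩ := ZMod.intCast_surjective ((x : ZMod q) * r)
    refine ⟨(x • ((m / i : ℕ) : ZMod m), y • ((n / j : ℕ) : ZMod n)), ?_, hx⟩
    exact (mem_Hp _).2 ⟨x, y, rfl, rfl, hy.symm⟩

lemma map_snd_Hp (hr : IsUnit r) :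
    (Hp m n i j q r).map (AddMonoidHom.snd _ _) = zmultiples ((n / j : ℕ) : ZMod n) := by
  ext a
  simp only [AddSubgroup.mem_map]
  constructor
  · rintro ⟨p, hp, rfl⟩
    obtain ⟨x, y, h1, h2, h3⟩ := (mem_Hp p).1 hp
    exact ⟨y, h2.symm⟩
  · intro ha
    obtain ⟨y, hy⟩ := mem_zmultiples_iff.1 ha
    obtain ⟨u, hu⟩ := hr
    obtain ⟨x, hx⟩ := ZMod.intCast_surjective ((y : ZMod q) * ((u⁻¹ : (ZMod q)ˣ) : ZMod q))
    refine ⟨(x • ((m / i : ℕ) : ZMod m), y • ((n / j : ℕ) : ZMod n)), ?_, hy⟩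
    refine (mem_Hp _).2 ⟨x, y, rfl, rfl, ?_⟩
    rw [hx, ← hu, mul_assoc]
    simp
  
lemma comap_inr_Hp (hi : i ∣ m) (hm : m ≠ 0) (hqi : q ∣ i) :
    (Hp m n i j q r).comap (AddMonoidHom.inr _ _) = zmultiples ((q * (n / j) : ℕ) : ZMod n) := by
  ext z
  simp only [AddSubgroup.mem_comap, AddMonoidHom.inr_apply]
  constructor
  · intro hz
    obtain ⟨x, y, h1, h2, h3⟩ := (mem_Hp _).1 hz
    have hx0 : (x : ZMod q) = 0 := by
      have hix : (i : ℤ) ∣ x := (zsmul_coe_eq_zero_iff hi hm _).1 (by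
        rw [← h1])
      have : (q : ℤ) ∣ x := dvd_trans (Int.natCast_dvd_natCast.2 hqi) hix
      exact (ZMod.intCast_zmod_eq_zero_iff_dvd _ _).2 this
    have hy0 : (q : ℤ) ∣ y := by
      refine (ZMod.intCast_zmod_eq_zero_iff_dvd _ _).1 ?_
      rw [← h3, hx0, zero_mul]
    obtain ⟨t, rfl⟩ := hy0
    refine mem_zmultiples_iff.2 ⟨t, ?_⟩
    have h2' : z = ((q : ℤ) * t) • ((n / j : ℕ) : ZMod n) := h2
    rw [h2']
    push_cast [zsmul_eq_mul]
    ring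
  · intro hz
    obtain ⟨t, rfl⟩ := mem_zmultiples_iff.1 hz
    refine (mem_Hp _).2 ⟨0, q * t, by simp, ?_, by push_cast; simp⟩
    show t • ((q * (n / j) : ℕ) : ZMod n) = _
    push_cast [zsmul_eq_mul]
    ring

lemma mul_div_eq_div_div {n j q : ℕ} (hj : j ∣ n) (hqj : q ∣ j) (hn : n ≠ 0) :
    q * (n / j) = n / (j / q) := by
  obtain ⟨j', rfl⟩ := hqj
  obtain ⟨n', rfl⟩ := hj
  have hq : q ≠ 0 := by rintro rfl; simp at hn
  have hj' : j' ≠ 0 := by rintro rfl; simp at hn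
  rw [Nat.mul_div_cancel_left j' (Nat.pos_of_ne_zero hq),
    Nat.mul_div_cancel_left n' (by positivity)]
  have : q * j' * n' = j' * (q * n') := by ring
  rw [this, Nat.mul_div_cancel_left _ (Nat.pos_of_ne_zero hj')]

lemma card_Hp (hi : i ∣ m) (hj : j ∣ n) (hm : m ≠ 0) (hn : n ≠ 0)
    (hqi : q ∣ i) (hqj : q ∣ j) :
    Nat.card (Hp m n i j q r) = i * (j / q) := by
  haveI : NeZero m := ⟨hm⟩
  haveI : NeZero n := ⟨hn⟩
  rw [card_addSubgroup_prod, map_fst_Hp, comap_inr_Hp hi hm hqi,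
    card_zmultiples_coe hi hm, mul_div_eq_div_div hj hqj hn,
    card_zmultiples_coe (dvd_trans (Nat.div_dvd_of_dvd hqj) hj) hn]
end



lemma Hp_iso {m n i j q A B : ℕ} (hm : m ≠ 0) (hn : n ≠ 0) (hA : 0 < A) (hB : 0 < B)
    (hi : i ∣ m) (hj : j ∣ n) (hlcm : Nat.lcm i j = B) (hAq : A * q = Nat.gcd i j)
    (r : (ZMod q)ˣ) :
    Nonempty ((Hp m n i j q (r : ZMod q)) ≃+ (ZMod A × ZMod B)) := by
  have hi0 : i ≠ 0 := by rintro rfl; exact hm (Nat.eq_zero_of_zero_dvd hi)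
  have hj0 : j ≠ 0 := by rintro rfl; exact hn (Nat.eq_zero_of_zero_dvd hj)
  set g := Nat.gcd i j with hg
  have hg0 : g ≠ 0 := Nat.gcd_ne_zero_left hi0
  have hq0 : q ≠ 0 := by rintro rfl; simp at hAq; omega
  have hqg : q ∣ g := ⟨A, by rw [← hAq]; ring⟩
  have hgi : g ∣ i := Nat.gcd_dvd_left i j
  have hgj : g ∣ j := Nat.gcd_dvd_right i j
  have hqi : q ∣ i := hqg.trans hgi
  have hqj : q ∣ j := hqg.trans hgj
  have hAg : A ∣ g := ⟨q, hAq.symm⟩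
  have hAi : A ∣ i := hAg.trans hgi
  have hiB : i ∣ B := hlcm ▸ Nat.dvd_lcm_left i j
  have hjB : j ∣ B := hlcm ▸ Nat.dvd_lcm_right i j
  have hgB : g * B = i * j := by rw [← hlcm]; exact Nat.gcd_mul_lcm i j
  haveI : NeZero m := ⟨hm⟩
  haveI : NeZero n := ⟨hn⟩
  haveI : NeZero j := ⟨hj0⟩
  haveI : NeZero q := ⟨hq0⟩
  haveI : NeZero A := ⟨hA.ne'⟩
  haveI : NeZero B := ⟨hB.ne'⟩
  -- choose a unit above r
  obtain ⟨Y, hY⟩ := ZMod.unitsMap_surjective hqj r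
  set y : ℕ := ((Y : ZMod j)).val with hy
  have hyr : ((y : ℕ) : ZMod q) = (r : ZMod q) := by
    have h1 : ((y : ℕ) : ZMod j) = (Y : ZMod j) := ZMod.natCast_zmod_val _
    have h2 : ((y : ℕ) : ZMod q) = ZMod.castHom hqj (ZMod q) ((y : ℕ) : ZMod j) :=
      (map_natCast (ZMod.castHom hqj (ZMod q)) y).symm
    rw [h2, h1]
    rw [← hY]
    simp [ZMod.unitsMap_def]
  have hyco : Nat.Coprime y j := ZMod.val_coe_unit_coprime Y
  have hgcd_iy : Nat.gcd (i * y) j = g := Nat.Coprime.gcd_mul_right_cancel i hyco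
  -- Bezout
  set c₁ : ℤ := Nat.gcdA (i * y) j with hc₁
  have hbez : (g : ℤ) = (i : ℤ) * y * c₁ + j * Nat.gcdB (i * y) j := by
    have := Nat.gcd_eq_gcd_ab (i * y) j
    rw [hgcd_iy] at this
    push_cast at this
    linarith [this]
  set Mg : ZMod m := ((m / i : ℕ) : ZMod m) with hMg
  set Ng : ZMod n := ((n / j : ℕ) : ZMod n) with hNg
  set v : ZMod m × ZMod n := ((1 : ℤ) • Mg, (y : ℤ) • Ng) with hv_def
  set k : ZMod m × ZMod n := ((0 : ℤ) • Mg, (q : ℤ) • Ng) with hk_def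
  set c : ℤ := ((i / A : ℕ) : ℤ) * c₁ with hc_def
  set u : ZMod m × ZMod n := k - c • v with hu_def
  have hv : v ∈ Hp m n i j q (r : ZMod q) := (mem_Hp _).2 ⟨1, (y : ℤ), rfl, rfl, by
    push_cast; rw [one_mul, hyr]⟩
  have hk : k ∈ Hp m n i j q (r : ZMod q) := (mem_Hp _).2 ⟨0, (q : ℤ), rfl, rfl, by
    push_cast; simp⟩
  have hu : u ∈ Hp m n i j q (r : ZMod q) :=
    AddSubgroup.sub_mem _ hk (AddSubgroup.zsmul_mem _ hv c)
  have hAc : (A : ℤ) * c = (i : ℤ) * c₁ := by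
    have h5 : (A * (i / A) : ℕ) = i := Nat.mul_div_cancel' hAi
    rw [hc_def, ← mul_assoc]
    norm_cast
    rw [h5]
  have hAu : (A : ℤ) • u = 0 := by
    have hfst : ((A : ℤ) • u).1 = (-((A : ℤ) * c)) • Mg := by
      simp only [hu_def, hk_def, hv_def, Prod.smul_fst, Prod.fst_sub, smul_sub, smul_smul]
      module
    have hsnd : ((A : ℤ) • u).2 = ((A : ℤ) * q - (A : ℤ) * c * y) • Ng := by
      simp only [hu_def, hk_def, hv_def, Prod.smul_snd, Prod.snd_sub, smul_sub, smul_smul]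
      module
    have h1 : ((A : ℤ) • u).1 = 0 := by
      rw [hfst, hMg, zsmul_coe_eq_zero_iff hi hm]
      exact ⟨-c₁, by rw [hAc]; ring⟩
    have h2 : ((A : ℤ) • u).2 = 0 := by
      rw [hsnd, hNg, zsmul_coe_eq_zero_iff hj hn]
      refine ⟨Nat.gcdB (i * y) j, ?_⟩
      have hAqZ : (A : ℤ) * q = (g : ℤ) := by exact_mod_cast hAq
      rw [hAqZ, hAc]
      linarith [hbez]
    exact Prod.ext h1 h2
  have hBv : (B : ℤ) • v = 0 := by
    have h1 : ((B : ℤ) • v).1 = (B : ℤ) • Mg := by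
      simp only [hv_def, Prod.smul_fst, smul_smul]; module
    have h2 : ((B : ℤ) • v).2 = ((B : ℤ) * y) • Ng := by
      simp only [hv_def, Prod.smul_snd, smul_smul]
    have h1' : ((B : ℤ) • v).1 = 0 := by
      rw [h1, hMg, zsmul_coe_eq_zero_iff hi hm]
      exact Int.natCast_dvd_natCast.2 hiB
    have h2' : ((B : ℤ) • v).2 = 0 := by
      rw [h2, hNg, zsmul_coe_eq_zero_iff hj hn]
      exact Dvd.dvd.mul_right (Int.natCast_dvd_natCast.2 hjB) _
    exact Prod.ext h1' h2'
  set fu : ZMod A →+ (ZMod m × ZMod n) :=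
    ZMod.lift A ⟨zmultiplesHom _ u, by simpa using hAu⟩ with hfu
  set fv : ZMod B →+ (ZMod m × ZMod n) :=
    ZMod.lift B ⟨zmultiplesHom _ v, by simpa using hBv⟩ with hfv
  set f : ZMod A × ZMod B →+ ZMod m × ZMod n := fu.coprod fv with hf
  have happly : ∀ s t : ℤ, f ((s : ZMod A), (t : ZMod B)) = s • u + t • v := by
    intro s t
    simp [hf, hfu, hfv, AddMonoidHom.coprod_apply, ZMod.lift_coe, zmultiplesHom_apply]
  have hmem : ∀ z, f z ∈ Hp m n i j q (r : ZMod q) := by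
    rintro ⟨s, t⟩
    obtain ⟨s', rfl⟩ := ZMod.intCast_surjective s
    obtain ⟨t', rfl⟩ := ZMod.intCast_surjective t
    rw [happly]
    exact AddSubgroup.add_mem _ (AddSubgroup.zsmul_mem _ hu _) (AddSubgroup.zsmul_mem _ hv _)
  have hsurj : ∀ p ∈ Hp m n i j q (r : ZMod q), ∃ z, f z = p := by
    intro p hp
    obtain ⟨x, y', h1, h2, h3⟩ := (mem_Hp p).1 hp
    have hq_dvd : (q : ℤ) ∣ (y' - x * y) := by
      refine (ZMod.intCast_zmod_eq_zero_iff_dvd _ _).1 ?_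
      push_cast
      rw [hyr, ← h3]
      ring
    obtain ⟨w, hw⟩ := hq_dvd
    have hy' : (y' : ℤ) = x * y + q * w := by linarith
    refine ⟨((w : ZMod A), ((x + c * w : ℤ) : ZMod B)), ?_⟩
    rw [happly]
    refine Prod.ext ?_ ?_
    · show (w • u + (x + c * w) • v).1 = p.1
      rw [h1]
      simp only [hu_def, hk_def, hv_def, Prod.smul_fst, Prod.fst_add, Prod.fst_sub,
        smul_sub, smul_smul]
      module
    · show (w • u + (x + c * w) • v).2 = p.2
      rw [h2, hy']
      simp only [hu_def, hk_def, hv_def, Prod.smul_snd, Prod.snd_add, Prod.snd_sub,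
        smul_sub, smul_smul]
      module
  have hcard : Nat.card (Hp m n i j q (r : ZMod q)) = A * B := by
    rw [card_Hp hi hj hm hn hqi hqj]
    have h6 : q * (i * (j / q)) = q * (A * B) := by
      rw [show q * (i * (j / q)) = i * (j / q * q) by ring, Nat.div_mul_cancel hqj,
        show i * j = g * B from hgB.symm, ← hAq]
      ring
    exact Nat.eq_of_mul_eq_mul_left (Nat.pos_of_ne_zero hq0) h6
  set f' : ZMod A × ZMod B →+ ↥(Hp m n i j q (r : ZMod q)) :=
    f.codRestrict _ hmem with hf'
  have hsurj' : Surjective f' := by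
    rintro ⟨p, hp⟩
    obtain ⟨z, hz⟩ := hsurj p hp
    exact ⟨z, Subtype.ext (by simpa [hf', AddMonoidHom.codRestrict] using hz)⟩
  haveI : Fintype ↥(Hp m n i j q (r : ZMod q)) := Fintype.ofFinite _
  have hbij : Bijective f' := by
    rw [Fintype.bijective_iff_surjective_and_card]
    refine ⟨hsurj', ?_⟩
    rw [Fintype.card_prod, ZMod.card, ZMod.card, ← Nat.card_eq_fintype_card, hcard]
  exact ⟨(AddEquiv.ofBijective f' hbij).symm⟩



lemma exists_Hp {m n A B : ℕ} (hm : m ≠ 0) (hn : n ≠ 0) (hA : 0 < A) (hB : 0 < B)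
    (hAB : A ∣ B) (H : AddSubgroup (ZMod m × ZMod n)) (e : H ≃+ (ZMod A × ZMod B)) :
    ∃ i j q : ℕ, i ∣ m ∧ j ∣ n ∧ Nat.lcm i j = B ∧ A * q = Nat.gcd i j ∧
      q = i * j / (A * B) ∧ ∃ r : (ZMod q)ˣ, H = Hp m n i j q (r : ZMod q) := by
  haveI : NeZero m := ⟨hm⟩
  haveI : NeZero n := ⟨hn⟩
  haveI : NeZero A := ⟨hA.ne'⟩
  haveI : NeZero B := ⟨hB.ne'⟩
  set C₁ := H.map (AddMonoidHom.fst (ZMod m) (ZMod n)) with hC₁def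
  set C₂ := H.map (AddMonoidHom.snd (ZMod m) (ZMod n)) with hC₂def
  set K₂ := H.comap (AddMonoidHom.inr (ZMod m) (ZMod n)) with hK₂def
  set i := Nat.card C₁ with hidef
  set j := Nat.card C₂ with hjdef
  set k₂ := Nat.card K₂ with hk₂def'
  obtain ⟨him, hC₁⟩ := addSubgroup_zmod_eq hm C₁
  obtain ⟨hjn, hC₂⟩ := addSubgroup_zmod_eq hn C₂
  have hi0 : i ≠ 0 := Nat.card_pos.ne'
  have hj0 : j ≠ 0 := Nat.card_pos.ne'
  have hk₂0 : k₂ ≠ 0 := Nat.card_pos.ne'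
  have hk₂j : k₂ ∣ j := by
    refine AddSubgroup.card_dvd_of_le (fun z hz => ?_)
    exact AddSubgroup.mem_map.2 ⟨(0, z), hz, rfl⟩
  set q := j / k₂ with hqdef
  have hqk : k₂ * q = j := Nat.mul_div_cancel' hk₂j
  have hq0 : q ≠ 0 := by rintro h; rw [h, mul_zero] at hqk; exact hj0 hqk.symm
  have hqj : q ∣ j := ⟨k₂, by rw [← hqk]; ring⟩
  have hcardH : Nat.card H = A * B := by
    rw [Nat.card_congr e.toEquiv, Nat.card_prod, Nat.card_zmod, Nat.card_zmod]
  have hHik : Nat.card H = i * k₂ := card_addSubgroup_prod H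
  -- B kills H
  have hBkill : ∀ h : H, B • h = 0 := by
    intro h
    apply e.injective
    rw [map_nsmul, map_zero]
    refine Prod.ext ?_ ?_
    · show B • (e h).1 = (0 : ZMod A × ZMod B).1
      rw [nsmul_eq_mul]
      have : (B : ZMod A) = 0 := (ZMod.natCast_eq_zero_iff _ _).2 hAB
      rw [this, zero_mul, Prod.fst_zero]
    · show B • (e h).2 = (0 : ZMod A × ZMod B).2
      rw [nsmul_eq_mul]
      have : (B : ZMod B) = 0 := ZMod.natCast_self B
      rw [this, zero_mul, Prod.snd_zero]
  have hBkill' : ∀ p ∈ H, B • p = (0 : ZMod m × ZMod n) := by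
    intro p hp
    have := hBkill ⟨p, hp⟩
    have := congrArg Subtype.val this
    simpa using this
  have hiB : i ∣ B := by
    have hmem : ((m / i : ℕ) : ZMod m) ∈ C₁ := by
      rw [hC₁]; exact mem_zmultiples _
    obtain ⟨p, hp, hp1⟩ := AddSubgroup.mem_map.1 hmem
    have h0 := congrArg Prod.fst (hBkill' p hp)
    simp only [Prod.smul_fst, Prod.fst_zero] at h0
    rw [show (AddMonoidHom.fst (ZMod m) (ZMod n)) p = p.1 from rfl] at hp1
    rw [hp1] at h0
    have : ((B : ℤ)) • ((m / i : ℕ) : ZMod m) = 0 := by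
      rw [natCast_zsmul]; exact h0
    exact_mod_cast (zsmul_coe_eq_zero_iff him hm _).1 this
  have hjB : j ∣ B := by
    have hmem : ((n / j : ℕ) : ZMod n) ∈ C₂ := by
      rw [hC₂]; exact mem_zmultiples _
    obtain ⟨p, hp, hp2⟩ := AddSubgroup.mem_map.1 hmem
    have h0 := congrArg Prod.snd (hBkill' p hp)
    simp only [Prod.smul_snd, Prod.snd_zero] at h0
    rw [show (AddMonoidHom.snd (ZMod m) (ZMod n)) p = p.2 from rfl] at hp2
    rw [hp2] at h0
    have : ((B : ℤ)) • ((n / j : ℕ) : ZMod n) = 0 := by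
      rw [natCast_zsmul]; exact h0
    exact_mod_cast (zsmul_coe_eq_zero_iff hjn hn _).1 this
  have hlcmB : Nat.lcm i j ∣ B := Nat.lcm_dvd hiB hjB
  have hBlcm : B ∣ Nat.lcm i j := by
    set hstar := e.symm (0, 1) with hstar_def
    have hord1 : addOrderOf ((0, 1) : ZMod A × ZMod B) = B := by
      rw [Prod.addOrderOf, addOrderOf_zero, ZMod.addOrderOf_one, Nat.lcm_one_left]
    have hordstar : addOrderOf hstar = B := by
      rw [hstar_def]
      exact (addOrderOf_injective e.symm.toAddMonoidHom e.symm.injective (0, 1)).trans hord1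
    have hkill : (Nat.lcm i j) • hstar = 0 := by
      have h1 : (hstar.val.1 : ZMod m) ∈ C₁ := AddSubgroup.mem_map.2 ⟨hstar.val, hstar.2, rfl⟩
      have h2 : (hstar.val.2 : ZMod n) ∈ C₂ := AddSubgroup.mem_map.2 ⟨hstar.val, hstar.2, rfl⟩
      rw [hC₁] at h1; rw [hC₂] at h2
      obtain ⟨t1, ht1⟩ := mem_zmultiples_iff.1 h1
      obtain ⟨t2, ht2⟩ := mem_zmultiples_iff.1 h2
      have hv1 : (Nat.lcm i j : ℤ) • hstar.val.1 = 0 := by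
        rw [← ht1, smul_comm]
        rw [(zsmul_coe_eq_zero_iff him hm _).2 (Int.natCast_dvd_natCast.2 (Nat.dvd_lcm_left i j))]
        simp
      have hv2 : (Nat.lcm i j : ℤ) • hstar.val.2 = 0 := by
        rw [← ht2, smul_comm]
        rw [(zsmul_coe_eq_zero_iff hjn hn _).2 (Int.natCast_dvd_natCast.2 (Nat.dvd_lcm_right i j))]
        simp
      have : (Nat.lcm i j) • hstar.val = (0 : ZMod m × ZMod n) := by
        refine Prod.ext ?_ ?_
        · simpa [natCast_zsmul] using hv1
        · simpa [natCast_zsmul] using hv2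
      exact Subtype.ext (by simpa using this)
    rw [← hordstar]
    exact addOrderOf_dvd_of_nsmul_eq_zero hkill
  have hlcm : Nat.lcm i j = B := Nat.dvd_antisymm hlcmB hBlcm
  have hgB : Nat.gcd i j * B = i * j := by rw [← hlcm]; exact Nat.gcd_mul_lcm i j
  have hiAB : i * k₂ = A * B := by rw [← hHik, hcardH]
  have hABq : A * B * q = i * j := by
    rw [← hiAB]
    rw [show i * k₂ * q = i * (k₂ * q) by ring, hqk]
  have hAq : A * q = Nat.gcd i j := by
    have hB0 : B ≠ 0 := hB.ne'
    refine Nat.eq_of_mul_eq_mul_left hB (?_ : B * (A * q) = B * Nat.gcd i j)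
    calc B * (A * q) = A * B * q := by ring
      _ = i * j := hABq
      _ = Nat.gcd i j * B := hgB.symm
      _ = B * Nat.gcd i j := by ring
  have hqval : q = i * j / (A * B) := by
    rw [← hABq, Nat.mul_div_cancel_left _ (Nat.mul_pos hA hB)]
  obtain ⟨hk₂n, hK₂⟩ := addSubgroup_zmod_eq hn K₂
  have hjq : j / q = k₂ := by
    rw [← hqk, Nat.mul_div_cancel _ (Nat.pos_of_ne_zero hq0)]
  have hnk₂ : (n / k₂ : ℕ) = q * (n / j) := by
    rw [mul_div_eq_div_div hjn hqj hn, hjq]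
  -- pick p₀ with first coordinate the generator
  have hmem₀ : ((m / i : ℕ) : ZMod m) ∈ C₁ := by rw [hC₁]; exact mem_zmultiples _
  obtain ⟨p₀, hp₀, hp₀1⟩ := AddSubgroup.mem_map.1 hmem₀
  have hp01' : p₀.1 = ((m / i : ℕ) : ZMod m) := hp₀1
  have hp₀2 : p₀.2 ∈ C₂ := AddSubgroup.mem_map.2 ⟨p₀, hp₀, rfl⟩
  rw [hC₂] at hp₀2
  obtain ⟨y₀, hy₀⟩ := mem_zmultiples_iff.1 hp₀2
  have hmain : H = Hp m n i j q ((y₀ : ℤ) : ZMod q) := by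
    ext p
    constructor
    · intro hp
      have hp1 : p.1 ∈ C₁ := AddSubgroup.mem_map.2 ⟨p, hp, rfl⟩
      have hp2 : p.2 ∈ C₂ := AddSubgroup.mem_map.2 ⟨p, hp, rfl⟩
      rw [hC₁] at hp1; rw [hC₂] at hp2
      obtain ⟨x, hx⟩ := mem_zmultiples_iff.1 hp1
      obtain ⟨yy, hyy⟩ := mem_zmultiples_iff.1 hp2
      have hpd : p - x • p₀ ∈ H := AddSubgroup.sub_mem _ hp (AddSubgroup.zsmul_mem _ hp₀ x)
      have hpd1 : (p - x • p₀).1 = 0 := by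
        simp only [Prod.fst_sub, Prod.smul_fst]
        rw [← hx, hp01', sub_self]
      have hpdmem : (p - x • p₀).2 ∈ K₂ := by
        refine AddSubgroup.mem_comap.2 ?_
        have heq : (AddMonoidHom.inr (ZMod m) (ZMod n)) (p - x • p₀).2 = p - x • p₀ :=
          Prod.ext hpd1.symm rfl
        rw [heq]
        exact hpd
      rw [hK₂] at hpdmem
      obtain ⟨t, ht⟩ := mem_zmultiples_iff.1 hpdmem
      have hsnd : (p - x • p₀).2 = ((yy : ℤ) - x * y₀) • ((n / j : ℕ) : ZMod n) := by
        simp only [Prod.snd_sub, Prod.smul_snd]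
        rw [← hyy, ← hy₀, smul_smul, sub_smul]
      have h7 : t • ((n / Nat.card ↥K₂ : ℕ) : ZMod n) = (t * q) • ((n / j : ℕ) : ZMod n) := by
        rw [show (n / Nat.card ↥K₂ : ℕ) = q * (n / j) from hnk₂]
        push_cast [zsmul_eq_mul]
        ring
      have hcomb : (((yy : ℤ) - x * y₀) - t * q) • ((n / j : ℕ) : ZMod n) = 0 := by
        rw [sub_smul, ← hsnd, ← ht, h7, sub_self]
      have hdvdj := (zsmul_coe_eq_zero_iff hjn hn _).1 hcomb
      have hdvd : (q : ℤ) ∣ ((yy : ℤ) - x * y₀) := by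
        have hqjZ : (q : ℤ) ∣ (j : ℤ) := Int.natCast_dvd_natCast.2 hqj
        have h8 : (q : ℤ) ∣ ((yy : ℤ) - x * y₀ - t * q) := hqjZ.trans hdvdj
        have h9 : (q : ℤ) ∣ t * q := ⟨t, mul_comm t q⟩
        have := dvd_add h8 h9
        simpa using this
      refine (mem_Hp p).2 ⟨x, yy, hx.symm, hyy.symm, ?_⟩
      have h9 : ((yy : ℤ) : ZMod q) = ((x * y₀ : ℤ) : ZMod q) :=
        coe_cast_sub_eq (x * y₀) yy (by simpa using (dvd_neg.2 hdvd))
      push_cast at h9 ⊢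
      rw [h9]
    · intro hp
      obtain ⟨x, yy, h1, h2, h3⟩ := (mem_Hp p).1 hp
      have hdvd : (q : ℤ) ∣ ((yy : ℤ) - x * y₀) := by
        refine (ZMod.intCast_zmod_eq_zero_iff_dvd _ _).1 ?_
        push_cast
        push_cast at h3
        rw [← h3]
        ring
      obtain ⟨t, ht⟩ := hdvd
      have hz : ((yy : ℤ) - x * y₀) • ((n / j : ℕ) : ZMod n) ∈ K₂ := by
        rw [hK₂]
        refine mem_zmultiples_iff.2 ⟨t, ?_⟩
        rw [show (n / Nat.card ↥K₂ : ℕ) = q * (n / j) from hnk₂, ht]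
        push_cast [zsmul_eq_mul]
        ring
      have hin : ((0 : ZMod m), ((yy : ℤ) - x * y₀) • ((n / j : ℕ) : ZMod n)) ∈ H := hz
      have hdecomp : p = x • p₀ + ((0 : ZMod m), ((yy : ℤ) - x * y₀) • ((n / j : ℕ) : ZMod n)) := by
        refine Prod.ext ?_ ?_
        · simp only [Prod.fst_add, Prod.smul_fst]
          rw [h1, hp01', add_zero]
        · simp only [Prod.snd_add, Prod.smul_snd]
          rw [h2, ← hy₀, smul_smul, sub_smul]
          abel
      rw [hdecomp]
      exact AddSubgroup.add_mem _ (AddSubgroup.zsmul_mem _ hp₀ x) hin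
  have hunit : IsUnit ((y₀ : ℤ) : ZMod q) := by
    have hmem : ((n / j : ℕ) : ZMod n) ∈ C₂ := by rw [hC₂]; exact mem_zmultiples _
    obtain ⟨p₁, hp₁, hp₁2⟩ := AddSubgroup.mem_map.1 hmem
    have hp₁2' : p₁.2 = ((n / j : ℕ) : ZMod n) := hp₁2
    rw [hmain] at hp₁
    obtain ⟨x₁, y₁, h1, h2, h3⟩ := (mem_Hp p₁).1 hp₁
    have h4 : ((y₁ : ℤ) - 1) • ((n / j : ℕ) : ZMod n) = 0 := by
      rw [sub_smul, one_smul, ← h2, hp₁2', sub_self]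
    have h5 : (j : ℤ) ∣ ((y₁ : ℤ) - 1) := (zsmul_coe_eq_zero_iff hjn hn _).1 h4
    have h6 : ((y₁ : ℤ) : ZMod q) = 1 := by
      have hq5 : (q : ℤ) ∣ ((y₁ : ℤ) - 1) := (Int.natCast_dvd_natCast.2 hqj).trans h5
      have := coe_cast_sub_eq y₁ 1 hq5
      rw [Int.cast_one] at this
      exact this.symm
    refine IsUnit.of_mul_eq_one ((x₁ : ℤ) : ZMod q) ?_
    push_cast at h3 ⊢
    rw [mul_comm, h3, h6]
  refine ⟨i, j, q, him, hjn, hlcm, hAq, hqval, hunit.unit, ?_⟩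
  rw [IsUnit.unit_spec]
  exact hmain



lemma index_hAq {A B i j : ℕ} (hB : 0 < B) (hd : A * B ∣ i * j) (hlcm : Nat.lcm i j = B) :
    A * (i * j / (A * B)) = Nat.gcd i j := by
  have h1 : A * B * (i * j / (A * B)) = i * j := Nat.mul_div_cancel' hd
  have h2 : Nat.gcd i j * B = i * j := by rw [← hlcm]; exact Nat.gcd_mul_lcm i j
  refine Nat.eq_of_mul_eq_mul_left hB ?_
  calc B * (A * (i * j / (A * B))) = A * B * (i * j / (A * B)) := by ring
    _ = i * j := h1
    _ = Nat.gcd i j * B := h2.symm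
    _ = B * Nat.gcd i j := by ring

lemma index_dvds {A B i j : ℕ} (hB : 0 < B) (hd : A * B ∣ i * j) (hlcm : Nat.lcm i j = B) :
    (i * j / (A * B)) ∣ i ∧ (i * j / (A * B)) ∣ j := by
  have hAq := index_hAq hB hd hlcm
  have hqg : (i * j / (A * B)) ∣ Nat.gcd i j := ⟨A, by rw [← hAq]; ring⟩
  exact ⟨hqg.trans (Nat.gcd_dvd_left i j), hqg.trans (Nat.gcd_dvd_right i j)⟩

lemma Hp_r_eq {m n i j q : ℕ} {r r' : ZMod q} (hi : i ∣ m) (hm : m ≠ 0)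
    (hj : j ∣ n) (hn : n ≠ 0) (hqi : q ∣ i) (hqj : q ∣ j)
    (h : Hp m n i j q r = Hp m n i j q r') : r = r' := by
  obtain ⟨yr, hyr⟩ := ZMod.intCast_surjective r
  have hv : ((1 : ℤ) • ((m / i : ℕ) : ZMod m), yr • ((n / j : ℕ) : ZMod n)) ∈ Hp m n i j q r :=
    (mem_Hp_pair hi hm hqi hj hn hqj 1 yr).2 (by push_cast; rw [one_mul, hyr])
  rw [h] at hv
  have h2 := (mem_Hp_pair hi hm hqi hj hn hqj 1 yr).1 hv
  push_cast at h2
  rw [one_mul, hyr] at h2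
  exact h2.symm

theorem subgroup_count_of_isomorphism_type (m n A B : ℕ) (hm : 0 < m) (hn : 0 < n)
    (hA : 0 < A) (hB : 0 < B) (hAB : A ∣ B) (hABmn : A * B ∣ m * n)
    (h : A ∣ Nat.gcd m n) :
    Nat.card {H : AddSubgroup (ZMod m × ZMod n) // Nonempty (H ≃+ (ZMod A × ZMod B))} =
      ∑ ij ∈ (m.divisors ×ˢ n.divisors).filter
          (fun ij => A * B ∣ ij.1 * ij.2 ∧ Nat.lcm ij.1 ij.2 = B),
        Nat.totient (ij.1 * ij.2 / (A * B)) := by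
  classical
  have hm0 : m ≠ 0 := hm.ne'
  have hn0 : n ≠ 0 := hn.ne'
  set S := (m.divisors ×ˢ n.divisors).filter
      (fun ij => A * B ∣ ij.1 * ij.2 ∧ Nat.lcm ij.1 ij.2 = B) with hS
  have hmemS : ∀ p : ℕ × ℕ, p ∈ S →
      p.1 ∣ m ∧ p.2 ∣ n ∧ A * B ∣ p.1 * p.2 ∧ Nat.lcm p.1 p.2 = B := by
    intro p hp
    rw [hS, Finset.mem_filter, Finset.mem_product] at hp
    exact ⟨(Nat.mem_divisors.1 hp.1.1).1, (Nat.mem_divisors.1 hp.1.2).1, hp.2.1, hp.2.2⟩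
  have hq0S : ∀ p : ℕ × ℕ, p ∈ S → p.1 * p.2 / (A * B) ≠ 0 := by
    intro p hp
    obtain ⟨h1, h2, h3, h4⟩ := hmemS p hp
    have hp1 : p.1 ≠ 0 := by intro h0; rw [h0] at h1; exact hm0 (Nat.eq_zero_of_zero_dvd h1)
    have hp2 : p.2 ≠ 0 := by intro h0; rw [h0] at h2; exact hn0 (Nat.eq_zero_of_zero_dvd h2)
    have hij0 : p.1 * p.2 ≠ 0 := Nat.mul_ne_zero hp1 hp2
    have hAB0 : A * B ≠ 0 := Nat.mul_ne_zero hA.ne' hB.ne'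
    exact Nat.div_ne_zero_iff.2 ⟨hAB0, Nat.le_of_dvd (Nat.pos_of_ne_zero hij0) h3⟩
  haveI hNZ : ∀ p : {x // x ∈ S}, NeZero (p.1.1 * p.1.2 / (A * B)) :=
    fun p => ⟨hq0S p.1 p.2⟩
  haveI hFT : ∀ p : {x // x ∈ S}, Fintype (ZMod (p.1.1 * p.1.2 / (A * B)))ˣ :=
    fun p => inferInstance
  set Φ : ((p : {x // x ∈ S}) × (ZMod (p.1.1 * p.1.2 / (A * B)))ˣ) →
      {H : AddSubgroup (ZMod m × ZMod n) // Nonempty (H ≃+ (ZMod A × ZMod B))} := fun z =>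
    ⟨Hp m n z.1.1.1 z.1.1.2 (z.1.1.1 * z.1.1.2 / (A * B)) (z.2 : ZMod _),
     Hp_iso hm0 hn0 hA hB (hmemS _ z.1.2).1 (hmemS _ z.1.2).2.1 (hmemS _ z.1.2).2.2.2
       (index_hAq hB (hmemS _ z.1.2).2.2.1 (hmemS _ z.1.2).2.2.2) z.2⟩ with hΦ
  have hbij : Bijective Φ := by
    constructor
    · rintro ⟨⟨p₁, hp₁⟩, r₁⟩ ⟨⟨p₂, hp₂⟩, r₂⟩ hzeq
      have hsub : Hp m n p₁.1 p₁.2 (p₁.1 * p₁.2 / (A * B)) (r₁ : ZMod _) =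
          Hp m n p₂.1 p₂.2 (p₂.1 * p₂.2 / (A * B)) (r₂ : ZMod _) := by
        exact congrArg Subtype.val hzeq
      obtain ⟨h11, h12, h13, h14⟩ := hmemS p₁ hp₁
      obtain ⟨h21, h22, h23, h24⟩ := hmemS p₂ hp₂
      obtain ⟨hq1i, hq1j⟩ := index_dvds hB h13 h14
      obtain ⟨hq2i, hq2j⟩ := index_dvds hB h23 h24
      have hi_eq : p₁.1 = p₂.1 := by
        have e1 := congrArg (fun K : AddSubgroup (ZMod m × ZMod n) =>
          Nat.card (K.map (AddMonoidHom.fst (ZMod m) (ZMod n)))) hsub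
        simp only [map_fst_Hp] at e1
        rwa [card_zmultiples_coe h11 hm0, card_zmultiples_coe h21 hm0] at e1
      have hj_eq : p₁.2 = p₂.2 := by
        have e1 := congrArg (fun K : AddSubgroup (ZMod m × ZMod n) =>
          Nat.card (K.map (AddMonoidHom.snd (ZMod m) (ZMod n)))) hsub
        simp only [map_snd_Hp r₁.isUnit, map_snd_Hp r₂.isUnit] at e1
        rwa [card_zmultiples_coe h12 hn0, card_zmultiples_coe h22 hn0] at e1
      have hp_eq : p₁ = p₂ := Prod.ext hi_eq hj_eq
      subst hp_eq
      have hr : (r₁ : ZMod (p₁.1 * p₁.2 / (A * B))) = (r₂ : ZMod _) :=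
        Hp_r_eq h11 hm0 h12 hn0 hq1i hq1j hsub
      have hr' : r₁ = r₂ := Units.ext hr
      subst hr'
      rfl
    · rintro ⟨H, hne⟩
      obtain ⟨e⟩ := hne
      obtain ⟨i, j, q, him, hjn, hlcm, hAq, hqval, r, hH⟩ :=
        exists_Hp hm0 hn0 hA hB hAB H e
      subst hqval
      have hd : A * B ∣ i * j := by
        refine ⟨i * j / (A * B), ?_⟩
        have h2 : Nat.gcd i j * B = i * j := by rw [← hlcm]; exact Nat.gcd_mul_lcm i j
        calc i * j = Nat.gcd i j * B := h2.symm
          _ = A * (i * j / (A * B)) * B := by rw [hAq]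
          _ = A * B * (i * j / (A * B)) := by ring
      have hmem : (i, j) ∈ S := by
        rw [hS, Finset.mem_filter, Finset.mem_product]
        exact ⟨⟨Nat.mem_divisors.2 ⟨him, hm0⟩, Nat.mem_divisors.2 ⟨hjn, hn0⟩⟩, hd, hlcm⟩
      refine ⟨⟨⟨(i, j), hmem⟩, r⟩, ?_⟩
      exact Subtype.ext hH.symm
  rw [← Nat.card_eq_of_bijective Φ hbij]
  rw [Nat.card_eq_fintype_card, Fintype.card_sigma]
  rw [← Finset.sum_coe_sort S (fun ij => Nat.totient (ij.1 * ij.2 / (A * B)))]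
  refine Finset.sum_congr rfl ?_
  intro p _
  exact ZMod.card_units_eq_totient _
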